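/- Consider a customer attraction game and define ψ(t) = ln(max(e^{-1}, t)) and Ψ(S) = ∑_{j∈N} v_j · ψ(c(j,S)). Let w_max = max_{i∈A} w_i and α = ln(1 + w_max) + 1. Then any strategy profile S^{Ψ*} that maximizes Ψ over the joint strategy space is an α-approximate pure Nash equilibrium. In particular, every customer attraction game admits an (ln(1+w_max)+1)-approximate pure Nash equilibrium. -/

import Mathlib

open Finset

/-- A customer attraction game: nodes `N` with integer values `≥ 1`, agents `A`
with integer weights `≥ 1`, and a nonempty finite strategy space (a finite set of
subsets of `N`) for each agent. -/
structure CAG (N A : Type*) [Fintype N] [Fintype A] where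
  v : N → ℕ
  v_pos : ∀ j, 1 ≤ v j
  w : A → ℕ
  w_pos : ∀ i, 1 ≤ w i
  strat : A → Finset (Finset N)
  strat_ne : ∀ i, (strat i).Nonempty

variable {N A : Type*} [Fintype N] [Fintype A] [DecidableEq N]

/-- The load `c(j,S)` of node `j`: total weight of agents attracting `j`. -/
def CAG.load (G : CAG N A) (S : A → Finset N) (j : N) : ℕ :=
  ∑ i : A, if j ∈ S i then G.w i else 0

/-- The utility `U_i(S) = ∑_{j ∈ S_i} v_j · w_i / c(j,S)`. -/
noncomputable def CAG.util (G : CAG N A) (S : A → Finset N) (i : A) : ℝ :=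
  ∑ j ∈ S i, (G.v j : ℝ) * (G.w i : ℝ) / (G.load S j : ℝ)

/-- A strategy profile: each agent plays a strategy from her strategy space. -/
def CAG.valid (G : CAG N A) (S : A → Finset N) : Prop :=
  ∀ i, S i ∈ G.strat i

/-- Pure Nash equilibrium. -/
def CAG.PNE [DecidableEq A] (G : CAG N A) (S : A → Finset N) : Prop :=
  G.valid S ∧ ∀ i, ∀ S' ∈ G.strat i, G.util (Function.update S i S') i ≤ G.util S i

/-- Social welfare. -/
noncomputable def CAG.sw (G : CAG N A) (S : A → Finset N) : ℝ :=
  ∑ i : A, G.util S i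

/-- The harmonic number `H_c = ∑_{k=1}^{c} 1/k`. -/
noncomputable def harm (c : ℕ) : ℝ := ∑ k ∈ Finset.range c, (1 : ℝ) / (k + 1)

/-- Rosenthal-type potential `Φ(S) = ∑_j v_j ∑_{k=1}^{c(j,S)} 1/k`. -/
noncomputable def CAG.pot (G : CAG N A) (S : A → Finset N) : ℝ :=
  ∑ j : N, (G.v j : ℝ) * harm (G.load S j)

/-- `ψ(t) = ln(max(e⁻¹, t))`. -/
noncomputable def psi (t : ℝ) : ℝ := Real.log (max (Real.exp (-1)) t)

/-- The potential `Ψ(S) = ∑_j v_j ψ(c(j,S))`. -/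
noncomputable def CAG.Psi (G : CAG N A) (S : A → Finset N) : ℝ :=
  ∑ j : N, (G.v j : ℝ) * psi (G.load S j : ℝ)

/-- `α`-approximate pure Nash equilibrium. -/
def CAG.approxPNE [DecidableEq A] (G : CAG N A) (α : ℝ) (S : A → Finset N) : Prop :=
  G.valid S ∧ ∀ i, ∀ S' ∈ G.strat i,
    G.util (Function.update S i S') i ≤ α * G.util S i

-- === auxiliary lemmas (verified separately) ===
lemma psi_zero' : psi 0 = -1 := by
  unfold psi
  rw [max_eq_left (le_of_lt (Real.exp_pos _)), Real.log_exp]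

lemma psi_nat' {n : ℕ} (hn : 1 ≤ n) : psi n = Real.log n := by
  have h : Real.exp (-1) ≤ (n : ℝ) := by
    calc Real.exp (-1) ≤ Real.exp 0 := Real.exp_le_exp.mpr (by norm_num)
      _ = 1 := Real.exp_zero
      _ ≤ n := by exact_mod_cast hn
  unfold psi
  rw [max_eq_right h]

lemma log_lemma_a {w m W : ℝ} (hw : 1 ≤ w) (hm : 1 ≤ m) (hW : w ≤ W) :
    Real.log (m + w) - Real.log m ≤ (Real.log (1 + W) + 1) * (w / (m + w)) := by
  have hm0 : (0:ℝ) < m := by linarith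
  have hw0 : (0:ℝ) < w := by linarith
  set t := w / m with ht_def
  have ht0 : 0 < t := by positivity
  have htw : t ≤ w := by
    rw [ht_def, div_le_iff₀ hm0]; nlinarith
  have h1 : Real.log (m + w) - Real.log m = Real.log (1 + t) := by
    rw [← Real.log_div (by positivity) (by positivity)]
    congr 1
    rw [ht_def]
    field_simp
  have h2 : Real.log (1 + t) ≤ t := by
    have := Real.log_le_sub_one_of_pos (show (0:ℝ) < 1 + t by linarith)
    linarith
  have h3 : Real.log (1 + t) ≤ Real.log (1 + W) := by
    have : (1:ℝ) + t ≤ 1 + W := by linarith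
    exact Real.log_le_log (by linarith) this
  have h4 : w / (m + w) = t / (1 + t) := by
    rw [ht_def]; field_simp
  rw [h1, h4, ← mul_div_assoc, le_div_iff₀ (by linarith : (0:ℝ) < 1 + t)]
  have hW0 : 0 ≤ Real.log (1 + W) := Real.log_nonneg (by linarith)
  nlinarith [mul_le_mul_of_nonneg_left h3 ht0.le]

lemma log_lemma_b {x c : ℝ} (hx : 0 < x) (hc : 0 < c) :
    x / (c + x) ≤ Real.log (c + x) - Real.log c := by
  have h := Real.log_le_sub_one_of_pos (show (0:ℝ) < c / (c + x) by positivity)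
  rw [Real.log_div hc.ne' (by positivity)] at h
  have h2 : c / (c + x) = 1 - x / (c + x) := by field_simp; ring
  rw [h2] at h
  linarith

lemma drop_bound (w m W : ℕ) (hw : 1 ≤ w) (hmax : w ≤ W) :
    psi ((m:ℝ) + w) - psi m ≤ (Real.log (1 + (W:ℝ)) + 1) * ((w:ℝ) / ((m:ℝ) + w)) := by
  have hw' : (1:ℝ) ≤ w := by exact_mod_cast hw
  have hW : (w:ℝ) ≤ W := by exact_mod_cast hmax
  rcases Nat.eq_zero_or_pos m with hm | hm
  · subst hm
    simp only [Nat.cast_zero, zero_add]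
    rw [psi_nat' hw]
    have h0 : psi (0:ℝ) = -1 := psi_zero'
    rw [h0]
    have hww : (w:ℝ) / (w:ℝ) = 1 := div_self (by linarith)
    rw [hww, mul_one]
    have : Real.log w ≤ Real.log (1 + W) := Real.log_le_log (by linarith) (by linarith)
    linarith
  · have hm' : (1:ℝ) ≤ m := by exact_mod_cast hm
    have h1 : psi ((m:ℝ) + w) = Real.log ((m:ℝ) + w) := by
      have : ((m + w : ℕ) : ℝ) = (m:ℝ) + w := by push_cast; ring
      rw [← this, psi_nat' (by omega)]
    rw [h1, psi_nat' hm]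
    exact log_lemma_a hw' hm' hW

lemma add_bound (w c : ℕ) (hw : 1 ≤ w) :
    (w:ℝ) / ((c:ℝ) + w) ≤ psi ((c:ℝ) + w) - psi c := by
  have hw' : (1:ℝ) ≤ w := by exact_mod_cast hw
  rcases Nat.eq_zero_or_pos c with hc | hc
  · subst hc
    simp only [Nat.cast_zero, zero_add]
    rw [psi_nat' hw, psi_zero']
    have hww : (w:ℝ) / (w:ℝ) = 1 := div_self (by linarith)
    rw [hww]
    have : 0 ≤ Real.log w := Real.log_nonneg hw'
    linarith
  · have hc' : (1:ℝ) ≤ c := by exact_mod_cast hc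
    have h1 : psi ((c:ℝ) + w) = Real.log ((c:ℝ) + w) := by
      have : ((c + w : ℕ) : ℝ) = (c:ℝ) + w := by push_cast; ring
      rw [← this, psi_nat' (by omega)]
    rw [h1, psi_nat' hc]
    exact log_lemma_b (by linarith) (by linarith)

lemma CAG.load_update (G : CAG N A) [DecidableEq A] (S : A → Finset N) (i : A)
    (S' : Finset N) (j : N) :
    G.load (Function.update S i S') j + (if j ∈ S i then G.w i else 0)
      = G.load S j + (if j ∈ S' then G.w i else 0) := by
  unfold CAG.load
  rw [← Finset.add_sum_erase _ (fun i' => if j ∈ Function.update S i S' i' then G.w i' else 0)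
        (Finset.mem_univ i),
      ← Finset.add_sum_erase _ (fun i' => if j ∈ S i' then G.w i' else 0) (Finset.mem_univ i)]
  simp only [Function.update_self]
  have h : ∑ x ∈ univ.erase i, (if j ∈ Function.update S i S' x then G.w x else 0)
       = ∑ x ∈ univ.erase i, (if j ∈ S x then G.w x else 0) := by
    apply Finset.sum_congr rfl
    intro x hx
    rw [Function.update_of_ne (Finset.ne_of_mem_erase hx)]
  rw [h]
  omega


/-- Any maximizer of `Ψ` over the joint strategy space is an
`α`-approximate PNE with `α = ln(1 + w_max) + 1`; in particular such an approximate
equilibrium always exists. -/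
theorem Psi_maximizer_is_approx_PNE [DecidableEq A] [Nonempty A]
    (G : CAG N A) :
    (∀ S : A → Finset N, G.valid S → (∀ S', G.valid S' → G.Psi S' ≤ G.Psi S) →
      G.approxPNE (Real.log (1 + (↑(Finset.univ.sup G.w) : ℝ)) + 1) S) ∧
    ∃ S : A → Finset N,
      G.approxPNE (Real.log (1 + (↑(Finset.univ.sup G.w) : ℝ)) + 1) S := by
  classical
  set W : ℕ := Finset.univ.sup G.w with hWdef
  have main : ∀ S : A → Finset N, G.valid S → (∀ S', G.valid S' → G.Psi S' ≤ G.Psi S) →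
      G.approxPNE (Real.log (1 + (W:ℝ)) + 1) S := by
    intro S hS hmax
    refine ⟨hS, fun i S' hS' => ?_⟩
    set α : ℝ := Real.log (1 + (W:ℝ)) + 1 with hα
    have hα1 : 1 ≤ α := by
      have hW0 : (0:ℝ) ≤ (W:ℝ) := Nat.cast_nonneg _
      have : 0 ≤ Real.log (1 + (W:ℝ)) := Real.log_nonneg (by linarith)
      linarith
    set T := Function.update S i S' with hTdef
    have hTvalid : G.valid T := by
      intro i'
      rcases eq_or_ne i' i with rfl | h
      · simpa [hTdef] using hS'
      · rw [hTdef, Function.update_of_ne h]; exact hS i'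
    have hΨ : G.Psi T ≤ G.Psi S := hmax T hTvalid
    have hwi : G.w i ≤ W := Finset.le_sup (Finset.mem_univ i)
    have hw1 : 1 ≤ G.w i := G.w_pos i
    have key : ∀ j : N,
        (if j ∈ S' then (G.v j : ℝ) * (G.w i : ℝ) / (G.load T j : ℝ) else 0)
          ≤ α * (if j ∈ S i then (G.v j : ℝ) * (G.w i : ℝ) / (G.load S j : ℝ) else 0)
            + (G.v j : ℝ) * (psi (G.load T j : ℝ) - psi (G.load S j : ℝ)) := by
      intro j
      have hload := G.load_update S i S' j
      rw [← hTdef] at hload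
      have hv0 : (0:ℝ) ≤ (G.v j : ℝ) := by positivity
      by_cases hj' : j ∈ S' <;> by_cases hj : j ∈ S i <;>
        simp only [hj', hj, if_true, if_false] at hload ⊢
      · -- j ∈ S', j ∈ S i : loads equal
        have hc : G.load T j = G.load S j := by omega
        rw [hc]
        have h0 : (0:ℝ) ≤ (G.v j : ℝ) * (G.w i : ℝ) / (G.load S j : ℝ) := by positivity
        nlinarith
      · -- j ∈ S', j ∉ S i : load T j = load S j + w i
        have hc : G.load T j = G.load S j + G.w i := by omega
        rw [hc]
        push_cast
        have hb := add_bound (G.w i) (G.load S j) hw1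
        have e : (G.v j : ℝ) * (G.w i : ℝ) / ((G.load S j : ℝ) + (G.w i : ℝ))
            = (G.v j : ℝ) * ((G.w i : ℝ) / ((G.load S j : ℝ) + (G.w i : ℝ))) := by ring
        nlinarith [mul_le_mul_of_nonneg_left hb hv0, e]
      · -- j ∉ S', j ∈ S i : load S j = load T j + w i
        have hc : G.load S j = G.load T j + G.w i := by omega
        rw [hc]
        push_cast
        have hd := drop_bound (G.w i) (G.load T j) W hw1 hwi
        rw [← hα] at hd
        have e : α * ((G.v j : ℝ) * (G.w i : ℝ) / ((G.load T j : ℝ) + (G.w i : ℝ)))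
            = (G.v j : ℝ) * (α * ((G.w i : ℝ) / ((G.load T j : ℝ) + (G.w i : ℝ)))) := by ring
        nlinarith [mul_le_mul_of_nonneg_left hd hv0, e]
      · have hc : G.load T j = G.load S j := by omega
        rw [hc]
        simp
    have hUT : G.util T i
        = ∑ j : N, (if j ∈ S' then (G.v j : ℝ) * (G.w i : ℝ) / (G.load T j : ℝ) else 0) := by
      rw [CAG.util]
      have hTi : T i = S' := by rw [hTdef, Function.update_self]
      rw [hTi, Finset.sum_ite_mem, Finset.univ_inter]
    have hUS : G.util S i
        = ∑ j : N, (if j ∈ S i then (G.v j : ℝ) * (G.w i : ℝ) / (G.load S j : ℝ) else 0) := by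
      rw [CAG.util, Finset.sum_ite_mem, Finset.univ_inter]
    have hD : ∑ j : N, (G.v j : ℝ) * (psi (G.load T j : ℝ) - psi (G.load S j : ℝ))
        = G.Psi T - G.Psi S := by
      rw [CAG.Psi, CAG.Psi, ← Finset.sum_sub_distrib]
      exact Finset.sum_congr rfl fun j _ => by ring
    calc G.util T i
        = ∑ j : N, (if j ∈ S' then (G.v j : ℝ) * (G.w i : ℝ) / (G.load T j : ℝ) else 0) := hUT
      _ ≤ ∑ j : N, (α * (if j ∈ S i then (G.v j : ℝ) * (G.w i : ℝ) / (G.load S j : ℝ) else 0)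
            + (G.v j : ℝ) * (psi (G.load T j : ℝ) - psi (G.load S j : ℝ))) :=
          Finset.sum_le_sum fun j _ => key j
      _ = α * G.util S i + (G.Psi T - G.Psi S) := by
          rw [Finset.sum_add_distrib, ← Finset.mul_sum, ← hUS, hD]
      _ ≤ α * G.util S i := by linarith
  refine ⟨main, ?_⟩
  have hne : (univ.filter fun S : A → Finset N => G.valid S).Nonempty := by
    refine ⟨fun i => (G.strat_ne i).choose, ?_⟩
    simp only [Finset.mem_filter, Finset.mem_univ, true_and]
    exact fun i => (G.strat_ne i).choose_spec
  obtain ⟨S, hSmem, hSmax⟩ :=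
    Finset.exists_max_image (univ.filter fun S : A → Finset N => G.valid S) G.Psi hne
  refine ⟨S, main S (Finset.mem_filter.1 hSmem).2 fun S' hS' => ?_⟩
  exact hSmax S' (Finset.mem_filter.2 ⟨Finset.mem_univ _, hS'⟩)
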